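/- For every integer m ≥ 3, the error term E_m(r) = V_m(r) − (2^m/ζ(m)) r^m satisfies E_m(r) = Ω(r^{m−1}); that is, there exists a constant c > 0 such that for every N there is a positive integer r ≥ N with |V_m(r) − (2^m/ζ(m)) r^m| ≥ c · r^{m−1}. -/

import Mathlib

lemma pow_sub_pow_le_nmul (a b : ℝ) (n : ℕ) (hb : 0 ≤ b) (hab : b ≤ a) :
    a ^ n - b ^ n ≤ n * a ^ (n - 1) * (a - b) := by
  rw [← geom_sum₂_mul a b n]
  have ha : 0 ≤ a := hb.trans hab
  refine mul_le_mul_of_nonneg_right ?_ (by linarith)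
  calc (∑ i ∈ Finset.range n, a ^ i * b ^ (n - 1 - i))
      ≤ ∑ _i ∈ Finset.range n, a ^ (n - 1) := by
        refine Finset.sum_le_sum fun i hi => ?_
        have hin : i + (n - 1 - i) = n - 1 := by
          have := Finset.mem_range.mp hi; omega
        calc a ^ i * b ^ (n - 1 - i) ≤ a ^ i * a ^ (n - 1 - i) := by
              refine mul_le_mul_of_nonneg_left (pow_le_pow_left₀ hb hab _) (pow_nonneg ha _)
          _ = a ^ (n - 1) := by rw [← pow_add, hin]
    _ = n * a ^ (n - 1) := by simp [Finset.sum_const]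

lemma nmul_le_pow_sub_pow (a b : ℝ) (n : ℕ) (hb : 0 ≤ b) (hab : b ≤ a) :
    n * b ^ (n - 1) * (a - b) ≤ a ^ n - b ^ n := by
  rw [← geom_sum₂_mul a b n]
  have ha : 0 ≤ a := hb.trans hab
  refine mul_le_mul_of_nonneg_right ?_ (by linarith)
  calc (n : ℝ) * b ^ (n - 1) = ∑ _i ∈ Finset.range n, b ^ (n - 1) := by simp [Finset.sum_const]
    _ ≤ ∑ i ∈ Finset.range n, a ^ i * b ^ (n - 1 - i) := by
        refine Finset.sum_le_sum fun i hi => ?_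
        have hin : i + (n - 1 - i) = n - 1 := by
          have := Finset.mem_range.mp hi; omega
        calc b ^ (n - 1) = b ^ i * b ^ (n - 1 - i) := by rw [← pow_add, hin]
          _ ≤ a ^ i * b ^ (n - 1 - i) := by
              refine mul_le_mul_of_nonneg_right (pow_le_pow_left₀ hb hab _) (pow_nonneg hb _)


lemma zeta_re_gt_one (m : ℕ) (hm : 3 ≤ m) : 1 < (riemannZeta m).re := by
  have hm1 : 1 < m := by omega
  have hsum : Summable fun n : ℕ => 1 / (n : ℝ) ^ m := by
    simp only [one_div]; exact Real.summable_nat_pow_inv.mpr (by omega)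
  have hsumC : Summable fun n : ℕ => 1 / (n : ℂ) ^ m := by
    apply Summable.of_norm
    convert hsum using 2 with n
    simp [norm_div, norm_pow]
  have h := zeta_nat_eq_tsum_of_gt_one hm1
  rw [h, Complex.re_tsum hsumC]
  have hre : ∀ n : ℕ, (1 / (n : ℂ) ^ m).re = 1 / (n : ℝ) ^ m := by
    intro n
    rw [show ((n : ℂ) ^ m) = ((((n:ℝ)) ^ m : ℝ) : ℂ) by push_cast; ring]
    rw [show (1 : ℂ) = ((1:ℝ) : ℂ) by norm_num, ← Complex.ofReal_div, Complex.ofReal_re]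
  simp only [hre]
  have h2 : (1:ℝ) + 1 / 2 ^ m ≤ ∑' n : ℕ, 1 / (n : ℝ) ^ m := by
    have := Summable.sum_le_tsum ({1, 2} : Finset ℕ) (fun n _ => by positivity) hsum
    simpa using this
  have : (0:ℝ) < 1 / 2 ^ m := by positivity
  linarith


/-- Number of lattice points visible from the origin in `[-r, r]^m`. -/
noncomputable def Vm (m r : ℕ) : ℕ :=
  ((Fintype.piFinset fun _ : Fin m => Finset.Icc (-(r : ℤ)) (r : ℤ)).filter
    fun x => Finset.univ.gcd x = 1).card

lemma cube_card (m r : ℕ) :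
    (Fintype.piFinset fun _ : Fin m => Finset.Icc (-(r : ℤ)) (r : ℤ)).card = (2 * r + 1) ^ m := by
  rw [Fintype.card_piFinset]
  have : (Finset.Icc (-(r : ℤ)) (r : ℤ)).card = 2 * r + 1 := by
    rw [Int.card_Icc]; omega
  simp [this]

lemma Vm_shell (m p : ℕ) (hp : p.Prime) :
    Vm m p + (2 * (p - 1) + 1) ^ m + 3 ^ m = Vm m (p - 1) + (2 * p + 1) ^ m + 1 := by
  have hp2 : 2 ≤ p := hp.two_le
  have hpz : (0:ℤ) < (p:ℤ) := by exact_mod_cast hp.pos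
  have hpne : (p:ℤ) ≠ 0 := hpz.ne'
  set q := p - 1 with hq
  have hq' : (q : ℤ) = (p : ℤ) - 1 := by rw [hq]; push_cast [Nat.cast_sub (by omega : 1 ≤ p)]; ring
  set cube : ℕ → Finset (Fin m → ℤ) :=
    fun r => Fintype.piFinset fun _ : Fin m => Finset.Icc (-(r : ℤ)) (r : ℤ) with hcube
  set P : (Fin m → ℤ) → Prop := fun x => Finset.univ.gcd x = 1 with hP
  have hsub : cube q ⊆ cube p := by
    refine Fintype.piFinset_subset _ _ fun a => Finset.Icc_subset_Icc ?_ ?_ <;>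
      · simp only [neg_le_neg_iff, Int.ofNat_le]; omega
  have hVsub : (cube q).filter P ⊆ (cube p).filter P := Finset.filter_subset_filter _ hsub
  have h1 := Finset.card_sdiff_add_card_eq_card hVsub
  have h2 := Finset.card_sdiff_add_card_eq_card hsub
  have h3 := Finset.card_filter_add_card_filter_not (s := cube p \ cube q) (p := P)
  have h4 : (cube p).filter P \ (cube q).filter P = (cube p \ cube q).filter P := by
    ext x; simp only [Finset.mem_sdiff, Finset.mem_filter]; tauto
  have h5 : ((cube p \ cube q).filter fun x => ¬ P x).card = 3 ^ m - 1 := by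
    have hbij : ((cube 1).erase (0 : Fin m → ℤ)).card
        = ((cube p \ cube q).filter fun x => ¬ P x).card := by
      refine Finset.card_bij (fun y _ => fun j => (p : ℤ) * y j) ?_ ?_ ?_
      · -- maps into
        intro y hy
        obtain ⟨hy0, hy1⟩ := Finset.mem_erase.mp hy
        simp only [hcube, Fintype.mem_piFinset, Finset.mem_Icc] at hy1
        obtain ⟨j0, hj0⟩ := Function.ne_iff.mp hy0
        simp only [Pi.zero_apply] at hj0
        refine Finset.mem_filter.mpr ⟨Finset.mem_sdiff.mpr ⟨?_, ?_⟩, ?_⟩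
        · simp only [hcube, Fintype.mem_piFinset, Finset.mem_Icc]
          intro j
          have ha := mul_le_mul_of_nonneg_left (hy1 j).1 hpz.le
          have hb := mul_le_mul_of_nonneg_left (hy1 j).2 hpz.le
          push_cast at ha hb ⊢
          constructor <;> linarith
        · simp only [hcube, Fintype.mem_piFinset, Finset.mem_Icc]
          push_neg
          refine ⟨j0, ?_⟩
          have ha := (hy1 j0).1
          have hb := (hy1 j0).2
          intro hl
          push_cast at ha hb hl ⊢
          have hyj : y j0 = 1 ∨ y j0 = -1 := by omega
          rcases hyj with h | h <;> rw [h] at hl ⊢ <;> [skip; omega]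
          simp only [mul_one] at hl ⊢; omega
        · simp only [hP]
          intro hgcd
          have hdvd : (p : ℤ) ∣ Finset.univ.gcd fun j => (p : ℤ) * y j :=
            Finset.dvd_gcd fun i _ => ⟨y i, rfl⟩
          rw [hgcd] at hdvd
          have : p ∣ 1 := by exact_mod_cast hdvd
          have := Nat.eq_one_of_dvd_one this
          omega
      · -- injective
        intro y hy y' hy' hxy
        funext j
        exact mul_left_cancel₀ hpne (congrFun hxy j)
      · -- surjective
        intro x hx
        obtain ⟨hxs, hxP⟩ := Finset.mem_filter.mp hx
        obtain ⟨hxp, hxq⟩ := Finset.mem_sdiff.mp hxs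
        simp only [hcube, Fintype.mem_piFinset, Finset.mem_Icc] at hxp hxq
        push_neg at hxq
        obtain ⟨j0, hj0⟩ := hxq
        have hxj0 : x j0 = (p:ℤ) ∨ x j0 = -(p:ℤ) := by
          have ha := (hxp j0).1; have hb := (hxp j0).2
          rw [hq'] at hj0
          by_cases hc : -((p:ℤ) - 1) ≤ x j0
          · have := hj0 hc; omega
          · omega
        set d := Finset.univ.gcd x with hd
        have hdnn : 0 ≤ d := Int.nonneg_of_normalize_eq_self Finset.normalize_gcd
        have hdj0 : d ∣ x j0 := Finset.gcd_dvd (Finset.mem_univ j0)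
        have hdp : d ∣ (p : ℤ) := by
          rcases hxj0 with h | h
          · rwa [h] at hdj0
          · rw [h] at hdj0; exact (dvd_neg.mp hdj0)
        have hdnat : d.natAbs ∣ p := by
          have := Int.natAbs_dvd_natAbs.mpr hdp
          simpa using this
        have hd1p : d.natAbs = 1 ∨ d.natAbs = p := (Nat.Prime.eq_one_or_self_of_dvd hp _ hdnat)
        have hdne1 : d ≠ 1 := by rw [hd]; exact hxP
        have hdp' : d = (p:ℤ) := by
          rcases hd1p with h | h
          · exfalso; apply hdne1; omega
          · omega
        have hpdvd : ∀ j, (p : ℤ) ∣ x j := by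
          intro j
          rw [← hdp']
          exact Finset.gcd_dvd (Finset.mem_univ j)
        refine ⟨fun j => x j / (p : ℤ), ?_, ?_⟩
        · refine Finset.mem_erase.mpr ⟨?_, ?_⟩
          · intro hcon
            have h0 : x j0 / (p:ℤ) = 0 := congrFun hcon j0
            have hcancel : (p:ℤ) * (x j0 / (p:ℤ)) = x j0 := Int.mul_ediv_cancel' (hpdvd j0)
            rw [h0, mul_zero] at hcancel
            rcases hxj0 with h | h <;> rw [h] at hcancel <;> omega
          · simp only [hcube, Fintype.mem_piFinset, Finset.mem_Icc]
            intro j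
            have hcancel : (p:ℤ) * (x j / (p:ℤ)) = x j := Int.mul_ediv_cancel' (hpdvd j)
            have ha := (hxp j).1; have hb := (hxp j).2
            rw [← hcancel] at ha hb
            have h1 : (p:ℤ) * (-1) ≤ (p:ℤ) * (x j / (p:ℤ)) := by linarith
            have h2 : (p:ℤ) * (x j / (p:ℤ)) ≤ (p:ℤ) * 1 := by linarith
            have hl := le_of_mul_le_mul_left h1 hpz
            have hr := le_of_mul_le_mul_left h2 hpz
            push_cast
            exact ⟨hl, hr⟩
        · funext j
          show (p:ℤ) * (x j / (p:ℤ)) = x j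
          exact Int.mul_ediv_cancel' (hpdvd j)
    have hcube1 : (cube 1).card = 3 ^ m := by
      have h : (cube 1).card = (2 * 1 + 1) ^ m := cube_card m 1
      norm_num at h
      exact h
    have hmem0 : (0 : Fin m → ℤ) ∈ cube 1 := by
      simp only [hcube, Fintype.mem_piFinset, Finset.mem_Icc]
      intro j; simp
    rw [← hbij, Finset.card_erase_of_mem hmem0, hcube1]
  -- assemble
  have hcp : (cube p).card = (2 * p + 1) ^ m := cube_card m p
  have hcq : (cube q).card = (2 * q + 1) ^ m := cube_card m q
  have hVp : Vm m p = ((cube p).filter P).card := rfl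
  have hVq : Vm m q = ((cube q).filter P).card := rfl
  rw [h4] at h1
  have h3m : 1 ≤ 3 ^ m := Nat.one_le_pow _ _ (by norm_num)
  rw [hVp, hVq]
  have hq1 : 2 * q + 1 = 2 * (p - 1) + 1 := by omega
  omega

theorem error_term_omega (m : ℕ) (hm : 3 ≤ m) :
    ∃ c : ℝ, 0 < c ∧ ∀ N : ℕ, ∃ r : ℕ, N ≤ r ∧ 0 < r ∧
      c * (r : ℝ) ^ (m - 1) ≤
        |(Vm m r : ℝ) - 2 ^ m / (riemannZeta m).re * (r : ℝ) ^ m| := by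
  have hz : 1 < (riemannZeta m).re := zeta_re_gt_one m hm
  set z := (riemannZeta m).re with hzdef
  have hz0 : 0 < z := by linarith only [hz]
  set A : ℝ := 2 ^ m / z with hA
  have hA0 : 0 < A := by positivity
  set δ : ℝ := 1 - 1 / z with hδ
  have hδ0 : 0 < δ := by
    rw [hδ]
    have : 1 / z < 1 := by rw [div_lt_one hz0]; linarith only [hz]
    linarith only [this]
  have hm0 : (0:ℝ) < m := by exact_mod_cast (by omega : 0 < m)
  set c1 : ℝ := m * 2 ^ (m - 1) * δ with hc1
  have hc10 : 0 < c1 := by rw [hc1]; positivity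
  set K : ℝ := 2 * m * ((m - 1 : ℕ) : ℝ) * 2 ^ (m - 2) + 3 ^ m with hK
  refine ⟨c1 / 2, by positivity, fun N => ?_⟩
  obtain ⟨p, hp_ge, hpp⟩ := Nat.exists_infinite_primes (max (N + 1) (⌈K / c1⌉₊ + 2))
  have hpN : N + 1 ≤ p := le_trans (le_max_left _ _) hp_ge
  have hpceil : ⌈K / c1⌉₊ + 2 ≤ p := le_trans (le_max_right _ _) hp_ge
  have hp2n : 2 ≤ p := hpp.two_le
  set P : ℝ := (p : ℝ) with hPdef
  have hP2 : (2:ℝ) ≤ P := by rw [hPdef]; exact_mod_cast hp2n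
  have hP1 : (1:ℝ) ≤ P := by linarith only [hP2]
  have hKc : K ≤ c1 * P := by
    have h1 : K / c1 ≤ (⌈K / c1⌉₊ : ℝ) := Nat.le_ceil _
    have h2 : ((⌈K / c1⌉₊ : ℕ) : ℝ) ≤ P := by
      rw [hPdef]; exact_mod_cast (by omega : ⌈K / c1⌉₊ ≤ p)
    have := (div_le_iff₀ hc10).mp (le_trans h1 h2)
    linarith only [this]
  have hTsucc : P ^ (m - 1) = P ^ (m - 2) * P := by
    rw [← pow_succ]; congr 1; omega
  have h2succ : (2:ℝ) ^ m = 2 ^ (m - 1) * 2 := by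
    rw [← pow_succ]; congr 1; omega
  have hT2nn : (0:ℝ) ≤ P ^ (m - 2) := by positivity
  have hT2one : (1:ℝ) ≤ P ^ (m - 2) := one_le_pow₀ hP1
  have hB : 2 * m * ((m - 1 : ℕ) : ℝ) * 2 ^ (m - 2) * P ^ (m - 2) + 3 ^ m ≤ c1 * P ^ (m - 1) := by
    rw [hTsucc]
    have h1 : K * P ^ (m - 2) ≤ c1 * P * P ^ (m - 2) :=
      mul_le_mul_of_nonneg_right hKc hT2nn
    have h2 : (3:ℝ) ^ m * 1 ≤ 3 ^ m * P ^ (m - 2) :=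
      mul_le_mul_of_nonneg_left hT2one (by positivity)
    rw [hK] at h1
    nlinarith
  have hcastp : ((p - 1 : ℕ) : ℝ) = P - 1 := by
    rw [hPdef]; push_cast [Nat.cast_sub (show 1 ≤ p from by omega)]; ring
  have hVcast : (Vm m p : ℝ) + (2 * P - 1) ^ m + 3 ^ m
      = (Vm m (p - 1) : ℝ) + (2 * P + 1) ^ m + 1 := by
    have h := Vm_shell m p hpp
    have e1 : ((Vm m p + (2 * (p - 1) + 1) ^ m + 3 ^ m : ℕ) : ℝ)
        = (Vm m p : ℝ) + (2 * P - 1) ^ m + 3 ^ m := by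
      rw [hPdef]; push_cast [Nat.cast_sub (show 1 ≤ p from by omega)]; ring_nf
    have e2 : ((Vm m (p - 1) + (2 * p + 1) ^ m + 1 : ℕ) : ℝ)
        = (Vm m (p - 1) : ℝ) + (2 * P + 1) ^ m + 1 := by
      rw [hPdef]; push_cast; ring
    rw [← e1, ← e2, h]
  have ha1 : (m:ℝ) * (2 * P - 1) ^ (m - 1) * 2 ≤ (2 * P + 1) ^ m - (2 * P - 1) ^ m := by
    have h := nmul_le_pow_sub_pow (2 * P + 1) (2 * P - 1) m (by linarith) (by linarith)
    have e : (2 * P + 1) - (2 * P - 1) = (2:ℝ) := by ring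
    rwa [e] at h
  have ha2 : (2 * P) ^ (m - 1) - (2 * P - 1) ^ (m - 1)
      ≤ ((m - 1 : ℕ) : ℝ) * (2 * P) ^ (m - 2) := by
    have h := pow_sub_pow_le_nmul (2 * P) (2 * P - 1) (m - 1) (by linarith) (by linarith)
    have e1 : m - 1 - 1 = m - 2 := by omega
    have e2 : (2 * P) - (2 * P - 1) = (1:ℝ) := by ring
    rw [e1, e2, mul_one] at h
    exact h
  have ha3 : P ^ m - (P - 1) ^ m ≤ (m:ℝ) * P ^ (m - 1) := by
    have h := pow_sub_pow_le_nmul P (P - 1) m (by linarith) (by linarith)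
    have e : P - (P - 1) = (1:ℝ) := by ring
    rw [e, mul_one] at h
    exact h
  have hA3 : A * (P ^ m - (P - 1) ^ m) ≤ A * ((m:ℝ) * P ^ (m - 1)) :=
    mul_le_mul_of_nonneg_left ha3 hA0.le
  have hscal : c1 * P ^ (m - 1) + A * ((m:ℝ) * P ^ (m - 1))
      = 2 * m * 2 ^ (m - 1) * P ^ (m - 1) - c1 * P ^ (m - 1) := by
    rw [hc1, hA, h2succ, hδ]
    field_simp
    ring
  have hmp1 : (2 * P) ^ (m - 1) = 2 ^ (m - 1) * P ^ (m - 1) := mul_pow 2 P (m - 1)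
  have hmp2 : (2 * P) ^ (m - 2) = 2 ^ (m - 2) * P ^ (m - 2) := mul_pow 2 P (m - 2)
  have hkey : c1 * P ^ (m - 1)
      ≤ ((Vm m p : ℝ) - A * P ^ m) - ((Vm m (p - 1) : ℝ) - A * (P - 1) ^ m) := by
    have hdiff : ((Vm m p : ℝ) - A * P ^ m) - ((Vm m (p - 1) : ℝ) - A * (P - 1) ^ m)
        = (2 * P + 1) ^ m - (2 * P - 1) ^ m - 3 ^ m + 1 - A * (P ^ m - (P - 1) ^ m) := by
      have h := hVcast
      have hexp : A * (P ^ m - (P - 1) ^ m) = A * P ^ m - A * (P - 1) ^ m := by ring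
      rw [hexp]; linarith only [h]
    rw [hdiff]
    have hG : 2 ^ (m - 1) * P ^ (m - 1) - ((m - 1 : ℕ) : ℝ) * (2 ^ (m - 2) * P ^ (m - 2))
        ≤ (2 * P - 1) ^ (m - 1) := by
      have h := ha2; rw [hmp1, hmp2] at h
      linarith only [h]
    have hGm := mul_le_mul_of_nonneg_left hG (le_of_lt hm0)
    -- hGm : m * (2^(m-1)P^(m-1) - (m-1) * (2^(m-2)P^(m-2))) ≤ m * (2P-1)^(m-1)
    linarith only [hB, hscal, ha1, hA3, hGm]
  have htri : ((Vm m p : ℝ) - A * P ^ m) - ((Vm m (p - 1) : ℝ) - A * (P - 1) ^ m)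
      ≤ |(Vm m p : ℝ) - A * P ^ m| + |(Vm m (p - 1) : ℝ) - A * (P - 1) ^ m| := by
    have h1 := le_abs_self ((Vm m p : ℝ) - A * P ^ m)
    have h2 := neg_abs_le ((Vm m (p - 1) : ℝ) - A * (P - 1) ^ m)
    linarith only [h1, h2]
  by_cases hcase : c1 / 2 * P ^ (m - 1) ≤ |(Vm m p : ℝ) - A * P ^ m|
  · exact ⟨p, by omega, by omega, hcase⟩
  · refine ⟨p - 1, by omega, by omega, ?_⟩
    rw [hcastp]
    push_neg at hcase
    have hmono : (P - 1) ^ (m - 1) ≤ P ^ (m - 1) :=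
      pow_le_pow_left₀ (by linarith) (by linarith) _
    have hstep : c1 / 2 * (P - 1) ^ (m - 1) ≤ c1 / 2 * P ^ (m - 1) :=
      mul_le_mul_of_nonneg_left hmono (by positivity)
    linarith only [hkey, htri, hcase, hstep]
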